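/- (Lemma 3, part (3).) Suppose there is a constant α > 0 such that J(0, u) ≥ α Σ_{t=0}^{N−1}|u_t|² for every control u. Then there exists a unique family of symmetric matrices P_t ∈ ℝ^{n×n} (t ∈ {0,…,N}) with P_N = H such that for every t ∈ {0,…,N−1}: R_t + B_t′P_{t+1}B_t ⪰ αI (hence invertible) and P_t = Q_t + A_t′P_{t+1}A_t − (A_t′P_{t+1}B_t + S_t′)(R_t + B_t′P_{t+1}B_t)^{−1}(B_t′P_{t+1}A_t + S_t). Moreover, setting K*_t = −(R_t + B_t′P_{t+1}B_t)^{−1}(B_t′P_{t+1}A_t + S_t), the pair (K*, 0) is a closed-loop optimal solution, and for every x₀ the control u*_t = K*_t x*_t (where x*₀ = x₀, x*_{t+1} = (A_t + B_t K*_t)x*_t) is the unique open-loop optimal control for x₀. -/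

import Mathlib

open Matrix Finset

noncomputable section

/-- State trajectory of the discrete-time linear system `x_{t+1} = A_t x_t + B_t u_t`. -/
def lqState {n m : ℕ} (A : ℕ → Matrix (Fin n) (Fin n) ℝ) (B : ℕ → Matrix (Fin n) (Fin m) ℝ)
    (x₀ : Fin n → ℝ) (u : ℕ → Fin m → ℝ) : ℕ → Fin n → ℝ
  | 0 => x₀
  | t + 1 => A t *ᵥ lqState A B x₀ u t + B t *ᵥ u t

/-- Quadratic cost `J(x₀, u)`. -/
def lqCost {n m : ℕ} (N : ℕ) (A : ℕ → Matrix (Fin n) (Fin n) ℝ)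
    (B : ℕ → Matrix (Fin n) (Fin m) ℝ) (Q : ℕ → Matrix (Fin n) (Fin n) ℝ)
    (R : ℕ → Matrix (Fin m) (Fin m) ℝ) (S : ℕ → Matrix (Fin m) (Fin n) ℝ)
    (H : Matrix (Fin n) (Fin n) ℝ) (x₀ : Fin n → ℝ) (u : ℕ → Fin m → ℝ) : ℝ :=
  (∑ t ∈ range N,
      (lqState A B x₀ u t ⬝ᵥ Q t *ᵥ lqState A B x₀ u t
        + 2 * (u t ⬝ᵥ S t *ᵥ lqState A B x₀ u t)
        + u t ⬝ᵥ R t *ᵥ u t))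
    + lqState A B x₀ u N ⬝ᵥ H *ᵥ lqState A B x₀ u N

/-- Closed-loop state `x_{t+1} = (A_t + B_t K_t) x_t + B_t v_t`. -/
def clState {n m : ℕ} (A : ℕ → Matrix (Fin n) (Fin n) ℝ) (B : ℕ → Matrix (Fin n) (Fin m) ℝ)
    (K : ℕ → Matrix (Fin m) (Fin n) ℝ) (v : ℕ → Fin m → ℝ) (x₀ : Fin n → ℝ) :
    ℕ → Fin n → ℝ
  | 0 => x₀
  | t + 1 => (A t + B t * K t) *ᵥ clState A B K v x₀ t + B t *ᵥ v t

/-- Outcome control `u_t = K_t x_t + v_t` of a closed-loop pair. -/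
def clControl {n m : ℕ} (A : ℕ → Matrix (Fin n) (Fin n) ℝ) (B : ℕ → Matrix (Fin n) (Fin m) ℝ)
    (K : ℕ → Matrix (Fin m) (Fin n) ℝ) (v : ℕ → Fin m → ℝ) (x₀ : Fin n → ℝ) (t : ℕ) :
    Fin m → ℝ :=
  K t *ᵥ clState A B K v x₀ t + v t


/-- The Riccati system of Lemma 3(3): symmetric solution with `R̂_t ⪰ αI` (hence invertible)
and the generalized Riccati recursion written with the true inverse. -/
def riccatiSolStrict {n m : ℕ} (N : ℕ) (A : ℕ → Matrix (Fin n) (Fin n) ℝ)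
    (B : ℕ → Matrix (Fin n) (Fin m) ℝ) (Q : ℕ → Matrix (Fin n) (Fin n) ℝ)
    (R : ℕ → Matrix (Fin m) (Fin m) ℝ) (S : ℕ → Matrix (Fin m) (Fin n) ℝ)
    (H : Matrix (Fin n) (Fin n) ℝ) (α : ℝ) (P : ℕ → Matrix (Fin n) (Fin n) ℝ) : Prop :=
  (∀ t ≤ N, (P t).IsSymm) ∧ P N = H ∧
  ∀ t < N,
    (R t + (B t)ᵀ * P (t + 1) * B t - α • (1 : Matrix (Fin m) (Fin m) ℝ)).PosSemidef ∧
    IsUnit (R t + (B t)ᵀ * P (t + 1) * B t) ∧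
    P t = Q t + (A t)ᵀ * P (t + 1) * A t
      - ((A t)ᵀ * P (t + 1) * B t + (S t)ᵀ)
        * (R t + (B t)ᵀ * P (t + 1) * B t)⁻¹ * ((B t)ᵀ * P (t + 1) * A t + S t)

namespace LQ37

variable {n m : ℕ}

lemma dot_swap {p q : ℕ} (M : Matrix (Fin p) (Fin q) ℝ) (v : Fin p → ℝ) (w : Fin q → ℝ) :
    v ⬝ᵥ M *ᵥ w = w ⬝ᵥ Mᵀ *ᵥ v := by
  rw [dotProduct_mulVec, ← mulVec_transpose, dotProduct_comm]

lemma dp_self_nonneg {p : ℕ} (v : Fin p → ℝ) : 0 ≤ v ⬝ᵥ v :=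
  Finset.sum_nonneg fun _ _ => mul_self_nonneg _

/-- One step of the generalized Riccati recursion. -/
def ricStep (A : ℕ → Matrix (Fin n) (Fin n) ℝ) (B : ℕ → Matrix (Fin n) (Fin m) ℝ)
    (Q : ℕ → Matrix (Fin n) (Fin n) ℝ) (R : ℕ → Matrix (Fin m) (Fin m) ℝ)
    (S : ℕ → Matrix (Fin m) (Fin n) ℝ) (t : ℕ) (X : Matrix (Fin n) (Fin n) ℝ) :
    Matrix (Fin n) (Fin n) ℝ :=
  Q t + (A t)ᵀ * X * A t
    - ((A t)ᵀ * X * B t + (S t)ᵀ) * (R t + (B t)ᵀ * X * B t)⁻¹ * ((B t)ᵀ * X * A t + S t)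

def ricAux (N : ℕ) (A : ℕ → Matrix (Fin n) (Fin n) ℝ) (B : ℕ → Matrix (Fin n) (Fin m) ℝ)
    (Q : ℕ → Matrix (Fin n) (Fin n) ℝ) (R : ℕ → Matrix (Fin m) (Fin m) ℝ)
    (S : ℕ → Matrix (Fin m) (Fin n) ℝ) (H : Matrix (Fin n) (Fin n) ℝ) :
    ℕ → Matrix (Fin n) (Fin n) ℝ
  | 0 => H
  | k + 1 => ricStep A B Q R S (N - (k + 1)) (ricAux N A B Q R S H k)

def ricP (N : ℕ) (A : ℕ → Matrix (Fin n) (Fin n) ℝ) (B : ℕ → Matrix (Fin n) (Fin m) ℝ)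
    (Q : ℕ → Matrix (Fin n) (Fin n) ℝ) (R : ℕ → Matrix (Fin m) (Fin m) ℝ)
    (S : ℕ → Matrix (Fin m) (Fin n) ℝ) (H : Matrix (Fin n) (Fin n) ℝ) (t : ℕ) :
    Matrix (Fin n) (Fin n) ℝ :=
  ricAux N A B Q R S H (N - t)

variable (N : ℕ) (A : ℕ → Matrix (Fin n) (Fin n) ℝ) (B : ℕ → Matrix (Fin n) (Fin m) ℝ)
  (Q : ℕ → Matrix (Fin n) (Fin n) ℝ) (R : ℕ → Matrix (Fin m) (Fin m) ℝ)
  (S : ℕ → Matrix (Fin m) (Fin n) ℝ) (H : Matrix (Fin n) (Fin n) ℝ)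

lemma ricP_top {t : ℕ} (ht : N ≤ t) : ricP N A B Q R S H t = H := by
  unfold ricP
  rw [Nat.sub_eq_zero_of_le ht]
  rfl

lemma ricP_eq {t : ℕ} (ht : t < N) :
    ricP N A B Q R S H t = ricStep A B Q R S t (ricP N A B Q R S H (t + 1)) := by
  unfold ricP
  have h1 : N - t = (N - (t + 1)) + 1 := by omega
  have h2 : N - ((N - (t + 1)) + 1) = t := by omega
  rw [h1, ricAux, h2]

/-- Completion-of-squares step identity. -/
lemma step_id (t : ℕ) (X : Matrix (Fin n) (Fin n) ℝ) (hX : X.IsSymm) (hRs : (R t).IsSymm)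
    (hU : IsUnit (R t + (B t)ᵀ * X * B t)) (x : Fin n → ℝ) (u : Fin m → ℝ) :
    x ⬝ᵥ Q t *ᵥ x + 2 * (u ⬝ᵥ S t *ᵥ x) + u ⬝ᵥ R t *ᵥ u
      + (A t *ᵥ x + B t *ᵥ u) ⬝ᵥ X *ᵥ (A t *ᵥ x + B t *ᵥ u)
    = x ⬝ᵥ (ricStep A B Q R S t X) *ᵥ x
      + (u - (-((R t + (B t)ᵀ * X * B t)⁻¹ * ((B t)ᵀ * X * A t + S t))) *ᵥ x) ⬝ᵥ
          (R t + (B t)ᵀ * X * B t) *ᵥ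
          (u - (-((R t + (B t)ᵀ * X * B t)⁻¹ * ((B t)ᵀ * X * A t + S t))) *ᵥ x) := by
  have hXe : Xᵀ = X := hX
  set Rh := R t + (B t)ᵀ * X * B t with hRh
  set M := (B t)ᵀ * X * A t + S t with hM
  set K : Matrix (Fin m) (Fin n) ℝ := -(Rh⁻¹ * M) with hK
  have hRhT : Rhᵀ = Rh := by
    rw [hRh]
    simp [Matrix.transpose_add, Matrix.transpose_mul, Matrix.mul_assoc, hXe, hRs.eq]
  have hdet : IsUnit Rh.det := (Matrix.isUnit_iff_isUnit_det Rh).1 hU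
  have h1 : Rh * Rh⁻¹ = 1 := Matrix.mul_nonsing_inv Rh hdet
  have hIT : (Rh⁻¹)ᵀ = Rh⁻¹ := by rw [Matrix.transpose_nonsing_inv, hRhT]
  have hMT : (A t)ᵀ * X * B t + (S t)ᵀ = Mᵀ := by
    rw [hM]
    simp [Matrix.transpose_add, Matrix.transpose_mul, Matrix.mul_assoc, hXe]
  have hRhK : Rh * K = -M := by
    rw [hK, Matrix.mul_neg, ← Matrix.mul_assoc, h1, Matrix.one_mul]
  have c1 : (A t *ᵥ x) ⬝ᵥ X *ᵥ (A t *ᵥ x) = x ⬝ᵥ ((A t)ᵀ * X * A t) *ᵥ x := by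
    rw [mulVec_mulVec, dot_swap, mulVec_mulVec, Matrix.transpose_mul, hXe, Matrix.mul_assoc]
  have c2 : (A t *ᵥ x) ⬝ᵥ X *ᵥ (B t *ᵥ u) = u ⬝ᵥ ((B t)ᵀ * X * A t) *ᵥ x := by
    rw [mulVec_mulVec, dot_swap, mulVec_mulVec, Matrix.transpose_mul, hXe, Matrix.mul_assoc]
  have c3 : (B t *ᵥ u) ⬝ᵥ X *ᵥ (A t *ᵥ x) = u ⬝ᵥ ((B t)ᵀ * X * A t) *ᵥ x := by
    rw [dot_swap X, hXe, c2]
  have c4 : (B t *ᵥ u) ⬝ᵥ X *ᵥ (B t *ᵥ u) = u ⬝ᵥ ((B t)ᵀ * X * B t) *ᵥ u := by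
    rw [mulVec_mulVec, dot_swap, mulVec_mulVec, Matrix.transpose_mul, hXe, Matrix.mul_assoc]
  have e1 : (A t *ᵥ x + B t *ᵥ u) ⬝ᵥ X *ᵥ (A t *ᵥ x + B t *ᵥ u)
      = x ⬝ᵥ ((A t)ᵀ * X * A t) *ᵥ x + 2 * (u ⬝ᵥ ((B t)ᵀ * X * A t) *ᵥ x)
        + u ⬝ᵥ ((B t)ᵀ * X * B t) *ᵥ u := by
    rw [Matrix.mulVec_add, dotProduct_add, add_dotProduct, add_dotProduct, c1, c2, c3, c4]
    ring
  have d1 : u ⬝ᵥ Rh *ᵥ (K *ᵥ x) = -(u ⬝ᵥ M *ᵥ x) := by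
    rw [mulVec_mulVec, hRhK, Matrix.neg_mulVec, dotProduct_neg]
  have d2 : (K *ᵥ x) ⬝ᵥ Rh *ᵥ u = -(u ⬝ᵥ M *ᵥ x) := by
    rw [dot_swap, hRhT, d1]
  have d3 : (K *ᵥ x) ⬝ᵥ Rh *ᵥ (K *ᵥ x) = x ⬝ᵥ (Mᵀ * Rh⁻¹ * M) *ᵥ x := by
    have hMK : Mᵀ * K = -(Mᵀ * Rh⁻¹ * M) := by
      rw [hK, Matrix.mul_neg, ← Matrix.mul_assoc]
    calc (K *ᵥ x) ⬝ᵥ Rh *ᵥ (K *ᵥ x) = (K *ᵥ x) ⬝ᵥ (Rh * K) *ᵥ x := by rw [mulVec_mulVec]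
      _ = (K *ᵥ x) ⬝ᵥ (-M) *ᵥ x := by rw [hRhK]
      _ = x ⬝ᵥ ((-M)ᵀ * K) *ᵥ x := by rw [dot_swap, mulVec_mulVec]
      _ = x ⬝ᵥ (Mᵀ * Rh⁻¹ * M) *ᵥ x := by
          rw [Matrix.transpose_neg, Matrix.neg_mul, hMK, neg_neg]
  have e2 : (u - K *ᵥ x) ⬝ᵥ Rh *ᵥ (u - K *ᵥ x)
      = u ⬝ᵥ Rh *ᵥ u + 2 * (u ⬝ᵥ M *ᵥ x) + x ⬝ᵥ (Mᵀ * Rh⁻¹ * M) *ᵥ x := by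
    rw [Matrix.mulVec_sub, dotProduct_sub, sub_dotProduct, sub_dotProduct, d1, d2, d3]
    ring
  have e3 : Q t + (A t)ᵀ * X * A t = ricStep A B Q R S t X + Mᵀ * Rh⁻¹ * M := by
    rw [ricStep, ← hRh, ← hM, hMT, sub_add_cancel]
  have eRhu : u ⬝ᵥ Rh *ᵥ u = u ⬝ᵥ R t *ᵥ u + u ⬝ᵥ ((B t)ᵀ * X * B t) *ᵥ u := by
    rw [hRh, Matrix.add_mulVec, dotProduct_add]
  have eMx : u ⬝ᵥ M *ᵥ x = u ⬝ᵥ ((B t)ᵀ * X * A t) *ᵥ x + u ⬝ᵥ S t *ᵥ x := by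
    rw [hM, Matrix.add_mulVec, dotProduct_add]
  have eQ : x ⬝ᵥ Q t *ᵥ x + x ⬝ᵥ ((A t)ᵀ * X * A t) *ᵥ x
      = x ⬝ᵥ (ricStep A B Q R S t X) *ᵥ x + x ⬝ᵥ (Mᵀ * Rh⁻¹ * M) *ᵥ x := by
    rw [← dotProduct_add, ← Matrix.add_mulVec, e3, Matrix.add_mulVec, dotProduct_add]
  rw [e1, e2, eRhu, eMx]
  linarith [eQ]

/-- Tail cost identity from time `r` on. -/
lemma tail_id (hRs : ∀ t, (R t).IsSymm) (P : ℕ → Matrix (Fin n) (Fin n) ℝ)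
    (hPN : P N = H)
    (hrec : ∀ t < N, P t = ricStep A B Q R S t (P (t + 1))) :
    ∀ k r, N - r = k → r ≤ N →
      (∀ s, r ≤ s → s < N → (P (s + 1)).IsSymm) →
      (∀ s, r ≤ s → s < N → IsUnit (R s + (B s)ᵀ * P (s + 1) * B s)) →
      ∀ (x₀ : Fin n → ℝ) (u : ℕ → Fin m → ℝ),
      ((∑ s ∈ Ico r N, (lqState A B x₀ u s ⬝ᵥ Q s *ᵥ lqState A B x₀ u s
          + 2 * (u s ⬝ᵥ S s *ᵥ lqState A B x₀ u s) + u s ⬝ᵥ R s *ᵥ u s))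
        + lqState A B x₀ u N ⬝ᵥ H *ᵥ lqState A B x₀ u N)
      = lqState A B x₀ u r ⬝ᵥ P r *ᵥ lqState A B x₀ u r
        + ∑ s ∈ Ico r N,
            ((u s - (-((R s + (B s)ᵀ * P (s + 1) * B s)⁻¹ *
                ((B s)ᵀ * P (s + 1) * A s + S s))) *ᵥ lqState A B x₀ u s) ⬝ᵥ
              (R s + (B s)ᵀ * P (s + 1) * B s) *ᵥ
             (u s - (-((R s + (B s)ᵀ * P (s + 1) * B s)⁻¹ *
                ((B s)ᵀ * P (s + 1) * A s + S s))) *ᵥ lqState A B x₀ u s)) := by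
  intro k
  induction k with
  | zero =>
    intro r hk hr _ _ x₀ u
    have hrN : r = N := by omega
    subst hrN
    simp [hPN]
  | succ k ih =>
    intro r hk hr hsym hunit x₀ u
    have hrN : r < N := by omega
    rw [Finset.sum_eq_sum_Ico_succ_bot hrN, Finset.sum_eq_sum_Ico_succ_bot hrN]
    have IH := ih (r + 1) (by omega) (by omega) (fun s h1 h2 => hsym s (by omega) h2)
      (fun s h1 h2 => hunit s (by omega) h2) x₀ u
    have hstep := step_id A B Q R S r (P (r + 1)) (hsym r le_rfl hrN) (hRs r)
      (hunit r le_rfl hrN) (lqState A B x₀ u r) (u r)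
    have hx : lqState A B x₀ u (r + 1) = A r *ᵥ lqState A B x₀ u r + B r *ᵥ u r := rfl
    rw [← hrec r hrN, ← hx] at hstep
    linarith [IH, hstep]

/-- Auxiliary closed-loop trajectory used to test the coercivity. -/
def auxTraj (A : ℕ → Matrix (Fin n) (Fin n) ℝ) (B : ℕ → Matrix (Fin n) (Fin m) ℝ)
    (Kf : ℕ → Matrix (Fin m) (Fin n) ℝ) (r : ℕ) (w : Fin m → ℝ) : ℕ → Fin n → ℝ
  | 0 => 0
  | s + 1 =>
      if s < r then 0
      else if s = r then B r *ᵥ w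
      else (A s + B s * Kf s) *ᵥ auxTraj A B Kf r w s

def auxCtrl (A : ℕ → Matrix (Fin n) (Fin n) ℝ) (B : ℕ → Matrix (Fin n) (Fin m) ℝ)
    (Kf : ℕ → Matrix (Fin m) (Fin n) ℝ) (r : ℕ) (w : Fin m → ℝ) (s : ℕ) : Fin m → ℝ :=
  if s < r then 0 else if s = r then w else Kf s *ᵥ auxTraj A B Kf r w s

lemma auxTraj_zero (Kf : ℕ → Matrix (Fin m) (Fin n) ℝ) (r : ℕ) (w : Fin m → ℝ) :
    ∀ s, s ≤ r → auxTraj A B Kf r w s = 0 := by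
  intro s
  cases s with
  | zero => intro _; rfl
  | succ s =>
    intro h
    have : s < r := by omega
    simp [auxTraj, this]

lemma auxState (Kf : ℕ → Matrix (Fin m) (Fin n) ℝ) (r : ℕ) (w : Fin m → ℝ) :
    ∀ s, lqState A B 0 (auxCtrl A B Kf r w) s = auxTraj A B Kf r w s := by
  intro s
  induction s with
  | zero => rfl
  | succ s ih =>
    show A s *ᵥ lqState A B 0 (auxCtrl A B Kf r w) s + B s *ᵥ auxCtrl A B Kf r w s = _
    by_cases h1 : s < r
    · rw [ih, auxTraj_zero A B Kf r w s (le_of_lt h1)]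
      simp [auxCtrl, auxTraj, h1]
    · by_cases h2 : s = r
      · subst h2
        rw [ih, auxTraj_zero A B Kf s w s le_rfl]
        simp [auxCtrl, auxTraj, h1]
      · rw [ih]
        simp only [auxCtrl, if_neg h1, if_neg h2, auxTraj, Matrix.add_mulVec, mulVec_mulVec]

/-- Backward induction establishing symmetry, positivity and invertibility. -/
lemma good (hQ : ∀ t, (Q t).IsSymm) (hRs : ∀ t, (R t).IsSymm) (hH : H.IsSymm)
    (α : ℝ) (hα : 0 < α)
    (hcoer : ∀ u : ℕ → Fin m → ℝ,
      α * ∑ t ∈ range N, u t ⬝ᵥ u t ≤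
        (∑ t ∈ range N,
          (lqState A B 0 u t ⬝ᵥ Q t *ᵥ lqState A B 0 u t
            + 2 * (u t ⬝ᵥ S t *ᵥ lqState A B 0 u t)
            + u t ⬝ᵥ R t *ᵥ u t))
        + lqState A B 0 u N ⬝ᵥ H *ᵥ lqState A B 0 u N) :
    ∀ k, (∀ s, N - k ≤ s → s ≤ N → (ricP N A B Q R S H s).IsSymm) ∧
      (∀ s, N - k ≤ s → s < N →
        (R s + (B s)ᵀ * ricP N A B Q R S H (s + 1) * B s
            - α • (1 : Matrix (Fin m) (Fin m) ℝ)).PosSemidef ∧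
        IsUnit (R s + (B s)ᵀ * ricP N A B Q R S H (s + 1) * B s)) := by
  intro k
  induction k with
  | zero =>
    constructor
    · intro s h1 h2
      have hNs : N ≤ s := by omega
      rw [ricP_top N A B Q R S H hNs]
      exact hH
    · intro s h1 h2
      omega
  | succ k ih =>
    obtain ⟨ih1, ih2⟩ := ih
    by_cases hk : N - (k + 1) = N - k
    · rw [hk]; exact ⟨ih1, ih2⟩
    · have hrlt : N - (k + 1) < N := by omega
      have hr1 : N - (k + 1) + 1 = N - k := by omega
      set r := N - (k + 1) with hrdef
      -- P (r+1) is symmetric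
      have hPsym1 : (ricP N A B Q R S H (r + 1)).IsSymm := ih1 (r + 1) (by omega) (by omega)
      have hP1e : (ricP N A B Q R S H (r + 1))ᵀ = ricP N A B Q R S H (r + 1) := hPsym1
      -- R̂_r is symmetric
      have hRhT : (R r + (B r)ᵀ * ricP N A B Q R S H (r + 1) * B r)ᵀ
          = R r + (B r)ᵀ * ricP N A B Q R S H (r + 1) * B r := by
        simp [Matrix.transpose_add, Matrix.transpose_mul, Matrix.mul_assoc, hP1e, (hRs r).eq]
      -- coercivity at r
      have hRhnew : ∀ w : Fin m → ℝ,
          α * (w ⬝ᵥ w) ≤ w ⬝ᵥ (R r + (B r)ᵀ * ricP N A B Q R S H (r + 1) * B r) *ᵥ w := by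
        intro w
        set Kf : ℕ → Matrix (Fin m) (Fin n) ℝ := fun s =>
          -((R s + (B s)ᵀ * ricP N A B Q R S H (s + 1) * B s)⁻¹ *
            ((B s)ᵀ * ricP N A B Q R S H (s + 1) * A s + S s)) with hKf
        set u : ℕ → Fin m → ℝ := auxCtrl A B Kf r w with hu
        have hst : ∀ s, lqState A B 0 u s = auxTraj A B Kf r w s := auxState A B Kf r w
        have htail := tail_id N A B Q R S H hRs (ricP N A B Q R S H)
          (ricP_top N A B Q R S H le_rfl) (fun t ht => ricP_eq N A B Q R S H ht)
          (N - (r + 1)) (r + 1) rfl (by omega)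
          (fun s h1 h2 => ih1 (s + 1) (by omega) (by omega))
          (fun s h1 h2 => (ih2 s (by omega) h2).2) 0 u
        -- the quadratic correction terms vanish for s > r
        have hdzero : ∑ s ∈ Ico (r + 1) N,
            ((u s - (-((R s + (B s)ᵀ * ricP N A B Q R S H (s + 1) * B s)⁻¹ *
                ((B s)ᵀ * ricP N A B Q R S H (s + 1) * A s + S s))) *ᵥ lqState A B 0 u s) ⬝ᵥ
              (R s + (B s)ᵀ * ricP N A B Q R S H (s + 1) * B s) *ᵥ
             (u s - (-((R s + (B s)ᵀ * ricP N A B Q R S H (s + 1) * B s)⁻¹ *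
                ((B s)ᵀ * ricP N A B Q R S H (s + 1) * A s + S s))) *ᵥ lqState A B 0 u s)) = 0 := by
          apply Finset.sum_eq_zero
          intro s hs
          have h1 : r < s := (Finset.mem_Ico.1 hs).1
          have hus : u s = Kf s *ᵥ auxTraj A B Kf r w s := by
            rw [hu]
            simp [auxCtrl, not_lt.2 h1.le, (Nat.ne_of_gt h1)]
          rw [hst s, hus, hKf]
          simp
        -- states and controls up to time r
        have hxr : ∀ s, s ≤ r → lqState A B 0 u s = 0 := fun s hs =>
          (hst s).trans (auxTraj_zero A B Kf r w s hs)
        have hur : u r = w := by rw [hu]; simp [auxCtrl]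
        have hsum1 : ∑ s ∈ range (r + 1),
            (lqState A B 0 u s ⬝ᵥ Q s *ᵥ lqState A B 0 u s
              + 2 * (u s ⬝ᵥ S s *ᵥ lqState A B 0 u s) + u s ⬝ᵥ R s *ᵥ u s)
            = w ⬝ᵥ R r *ᵥ w := by
          rw [Finset.sum_range_succ]
          have h0 : ∑ s ∈ range r,
              (lqState A B 0 u s ⬝ᵥ Q s *ᵥ lqState A B 0 u s
                + 2 * (u s ⬝ᵥ S s *ᵥ lqState A B 0 u s) + u s ⬝ᵥ R s *ᵥ u s) = 0 := by
            apply Finset.sum_eq_zero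
            intro s hs
            have hsr : s < r := Finset.mem_range.1 hs
            have hu0 : u s = 0 := by rw [hu]; simp [auxCtrl, hsr]
            rw [hxr s (le_of_lt hsr), hu0]
            simp
          rw [h0, hxr r le_rfl, hur]
          simp
        have hx1 : lqState A B 0 u (r + 1) = B r *ᵥ w := by
          rw [hst (r + 1)]
          simp [auxTraj]
        have hterm : lqState A B 0 u (r + 1) ⬝ᵥ ricP N A B Q R S H (r + 1) *ᵥ
              lqState A B 0 u (r + 1)
            = w ⬝ᵥ ((B r)ᵀ * ricP N A B Q R S H (r + 1) * B r) *ᵥ w := by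
          rw [hx1, mulVec_mulVec, dot_swap, mulVec_mulVec, Matrix.transpose_mul, hP1e,
            Matrix.mul_assoc]
        -- assemble the cost
        have hco := hcoer u
        have hsplit : ∑ s ∈ range N,
            (lqState A B 0 u s ⬝ᵥ Q s *ᵥ lqState A B 0 u s
              + 2 * (u s ⬝ᵥ S s *ᵥ lqState A B 0 u s) + u s ⬝ᵥ R s *ᵥ u s)
            = (∑ s ∈ range (r + 1),
                (lqState A B 0 u s ⬝ᵥ Q s *ᵥ lqState A B 0 u s
                  + 2 * (u s ⬝ᵥ S s *ᵥ lqState A B 0 u s) + u s ⬝ᵥ R s *ᵥ u s))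
              + ∑ s ∈ Ico (r + 1) N,
                (lqState A B 0 u s ⬝ᵥ Q s *ᵥ lqState A B 0 u s
                  + 2 * (u s ⬝ᵥ S s *ᵥ lqState A B 0 u s) + u s ⬝ᵥ R s *ᵥ u s) := by
          simp only [Finset.range_eq_Ico]
          exact (Finset.sum_Ico_consecutive _ (Nat.zero_le (r + 1)) (by omega)).symm
        have hwsum : w ⬝ᵥ w ≤ ∑ t ∈ range N, u t ⬝ᵥ u t := by
          have h1 : u r ⬝ᵥ u r = w ⬝ᵥ w := by rw [hur]
          calc w ⬝ᵥ w = u r ⬝ᵥ u r := h1.symm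
            _ ≤ ∑ t ∈ range N, u t ⬝ᵥ u t :=
                Finset.single_le_sum (fun i _ => dp_self_nonneg (u i))
                  (Finset.mem_range.2 (by omega))
        have hRhval : w ⬝ᵥ (R r + (B r)ᵀ * ricP N A B Q R S H (r + 1) * B r) *ᵥ w
            = w ⬝ᵥ R r *ᵥ w
              + w ⬝ᵥ ((B r)ᵀ * ricP N A B Q R S H (r + 1) * B r) *ᵥ w := by
          rw [Matrix.add_mulVec, dotProduct_add]
        have hmono : α * (w ⬝ᵥ w) ≤ α * ∑ t ∈ range N, u t ⬝ᵥ u t :=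
          mul_le_mul_of_nonneg_left hwsum (le_of_lt hα)
        rw [hsplit] at hco
        rw [hdzero] at htail
        rw [hsum1] at hco
        rw [hterm] at htail
        rw [hRhval]
        linarith
      -- positive semidefiniteness of R̂_r - α I
      have hPSD : (R r + (B r)ᵀ * ricP N A B Q R S H (r + 1) * B r
          - α • (1 : Matrix (Fin m) (Fin m) ℝ)).PosSemidef := by
        refine posSemidef_iff_dotProduct_mulVec.2 ⟨?_, fun w => ?_⟩
        · rw [Matrix.IsHermitian, Matrix.conjTranspose_eq_transpose_of_trivial,
            Matrix.transpose_sub, hRhT, Matrix.transpose_smul, Matrix.transpose_one]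
        · have h := hRhnew w
          rw [star_trivial, Matrix.sub_mulVec, dotProduct_sub, Matrix.smul_mulVec,
            Matrix.one_mulVec, dotProduct_smul, smul_eq_mul]
          linarith
      have hUnit : IsUnit (R r + (B r)ᵀ * ricP N A B Q R S H (r + 1) * B r) := by
        have hpd : (R r + (B r)ᵀ * ricP N A B Q R S H (r + 1) * B r).PosDef := by
          refine posDef_iff_dotProduct_mulVec.2 ⟨?_, fun w hw => ?_⟩
          · rw [Matrix.IsHermitian, Matrix.conjTranspose_eq_transpose_of_trivial, hRhT]
          · have h := hRhnew w
            have hww : 0 < w ⬝ᵥ w :=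
              lt_of_le_of_ne (dp_self_nonneg w)
                (fun hc => hw (dotProduct_self_eq_zero.1 hc.symm))
            have := mul_pos hα hww
            rw [star_trivial]
            linarith
        exact (Matrix.isUnit_iff_isUnit_det _).2
          (isUnit_iff_ne_zero.2 (ne_of_gt hpd.det_pos))
      have hPrsym : (ricP N A B Q R S H r).IsSymm := by
        have hdet : IsUnit (R r + (B r)ᵀ * ricP N A B Q R S H (r + 1) * B r).det :=
          (Matrix.isUnit_iff_isUnit_det _).1 hUnit
        have hIT : ((R r + (B r)ᵀ * ricP N A B Q R S H (r + 1) * B r)⁻¹)ᵀ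
            = (R r + (B r)ᵀ * ricP N A B Q R S H (r + 1) * B r)⁻¹ := by
          rw [Matrix.transpose_nonsing_inv, hRhT]
        have hMT : (A r)ᵀ * ricP N A B Q R S H (r + 1) * B r + (S r)ᵀ
            = ((B r)ᵀ * ricP N A B Q R S H (r + 1) * A r + S r)ᵀ := by
          simp [Matrix.transpose_add, Matrix.transpose_mul, Matrix.mul_assoc, hP1e]
        unfold Matrix.IsSymm
        rw [ricP_eq N A B Q R S H hrlt]
        unfold ricStep
        rw [hMT]
        simp [Matrix.transpose_sub, Matrix.transpose_add, Matrix.transpose_mul,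
          Matrix.transpose_transpose, Matrix.mul_assoc, hP1e, Matrix.transpose_nonsing_inv,
          (hQ r).eq, (hRs r).eq]
      refine ⟨?_, ?_⟩
      · -- symmetry on [r, N]
        intro s h1 h2
        rcases Nat.lt_or_ge s (N - k) with hs | hs
        swap
        · exact ih1 s hs h2
        have hsr : s = r := by omega
        subst hsr
        exact hPrsym
      · -- positivity etc on [r, N)
        intro s h1 h2
        rcases Nat.lt_or_ge s (N - k) with hs | hs
        swap
        · exact ih2 s hs h2
        have hsr : s = r := by omega
        subst hsr
        exact ⟨hPSD, hUnit⟩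

lemma clEq (K : ℕ → Matrix (Fin m) (Fin n) ℝ) (x₀ : Fin n → ℝ) :
    ∀ t, lqState A B x₀ (clControl A B K (fun _ => 0) x₀) t
      = clState A B K (fun _ => 0) x₀ t := by
  intro t
  induction t with
  | zero => rfl
  | succ t ih =>
    show A t *ᵥ lqState A B x₀ (clControl A B K (fun _ => 0) x₀) t
        + B t *ᵥ clControl A B K (fun _ => 0) x₀ t = _
    rw [ih]
    show _ = (A t + B t * K t) *ᵥ clState A B K (fun _ => 0) x₀ t + B t *ᵥ (0 : Fin m → ℝ)
    simp [clControl, Matrix.add_mulVec, mulVec_mulVec]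

end LQ37

open LQ37

/-- Lemma 3 part (3): under uniform convexity of `J(0,·)`, the Riccati
equation has a unique solution with `R̂_t ⪰ αI`; the induced feedback `(K*, 0)` is a
closed-loop optimal solution and its outcome is the unique open-loop optimal control. -/
theorem stmt_7 {n m : ℕ} (hn : 0 < n) (hm : 0 < m) (N : ℕ) (hN : 0 < N)
    (A : ℕ → Matrix (Fin n) (Fin n) ℝ) (B : ℕ → Matrix (Fin n) (Fin m) ℝ)
    (Q : ℕ → Matrix (Fin n) (Fin n) ℝ) (R : ℕ → Matrix (Fin m) (Fin m) ℝ)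
    (S : ℕ → Matrix (Fin m) (Fin n) ℝ) (H : Matrix (Fin n) (Fin n) ℝ)
    (hQ : ∀ t, (Q t).IsSymm) (hR : ∀ t, (R t).IsSymm) (hH : H.IsSymm)
    (α : ℝ) (hα : 0 < α)
    (hcoer : ∀ u : ℕ → Fin m → ℝ,
      α * ∑ t ∈ range N, u t ⬝ᵥ u t ≤ lqCost N A B Q R S H 0 u) :
    ∃ P : ℕ → Matrix (Fin n) (Fin n) ℝ,
      riccatiSolStrict N A B Q R S H α P ∧
      (∀ P' : ℕ → Matrix (Fin n) (Fin n) ℝ,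
        riccatiSolStrict N A B Q R S H α P' → ∀ t ≤ N, P' t = P t) ∧
      (let K : ℕ → Matrix (Fin m) (Fin n) ℝ := fun t =>
          -((R t + (B t)ᵀ * P (t + 1) * B t)⁻¹ * ((B t)ᵀ * P (t + 1) * A t + S t))
       (∀ x₀ : Fin n → ℝ, ∀ u : ℕ → Fin m → ℝ,
          lqCost N A B Q R S H x₀ (clControl A B K (fun _ => 0) x₀)
            ≤ lqCost N A B Q R S H x₀ u) ∧
       (∀ x₀ : Fin n → ℝ, ∀ ubar : ℕ → Fin m → ℝ,
          (∀ u : ℕ → Fin m → ℝ,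
            lqCost N A B Q R S H x₀ ubar ≤ lqCost N A B Q R S H x₀ u) →
          ∀ t < N, ubar t = clControl A B K (fun _ => 0) x₀ t)) := by
  classical
  obtain ⟨hg1, hg2⟩ := LQ37.good N A B Q R S H hQ hR hH α hα (fun u => hcoer u) N
  refine ⟨ricP N A B Q R S H, ⟨fun t ht => hg1 t (by omega) ht,
    ricP_top N A B Q R S H le_rfl,
    fun t ht => ⟨(hg2 t (by omega) ht).1, (hg2 t (by omega) ht).2,
      ricP_eq N A B Q R S H ht⟩⟩, ?_, ?_⟩
  · -- uniqueness of the Riccati solution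
    rintro P' ⟨hs', hN', hrec'⟩ t ht
    have key : ∀ k, k ≤ N → P' (N - k) = ricP N A B Q R S H (N - k) := by
      intro k
      induction k with
      | zero =>
        intro _
        simp only [Nat.sub_zero]
        rw [hN', ricP_top N A B Q R S H le_rfl]
      | succ k ih =>
        intro hk
        by_cases h : N - (k + 1) = N - k
        · rw [h]; exact ih (by omega)
        · have hlt : N - (k + 1) < N := by omega
          have h1 : N - (k + 1) + 1 = N - k := by omega
          have hre := (hrec' (N - (k + 1)) hlt).2.2
          rw [ricP_eq N A B Q R S H hlt, hre, h1, ih (by omega)]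
          rfl
    have := key (N - t) (by omega)
    rwa [show N - (N - t) = t by omega] at this
  · -- optimality
    intro K
    have hKs : ∀ t, K t = -((R t + (B t)ᵀ * ricP N A B Q R S H (t + 1) * B t)⁻¹ *
        ((B t)ᵀ * ricP N A B Q R S H (t + 1) * A t + S t)) := fun t => rfl
    have costid : ∀ (x₀ : Fin n → ℝ) (u : ℕ → Fin m → ℝ),
        lqCost N A B Q R S H x₀ u
        = lqState A B x₀ u 0 ⬝ᵥ ricP N A B Q R S H 0 *ᵥ lqState A B x₀ u 0
          + ∑ s ∈ Ico 0 N,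
              ((u s - K s *ᵥ lqState A B x₀ u s) ⬝ᵥ
                (R s + (B s)ᵀ * ricP N A B Q R S H (s + 1) * B s) *ᵥ
               (u s - K s *ᵥ lqState A B x₀ u s)) := by
      intro x₀ u
      have h := tail_id N A B Q R S H hR (ricP N A B Q R S H)
        (ricP_top N A B Q R S H le_rfl) (fun t ht => ricP_eq N A B Q R S H ht)
        N 0 (by omega) (Nat.zero_le N)
        (fun s _ h2 => hg1 (s + 1) (by omega) (by omega))
        (fun s _ h2 => (hg2 s (by omega) h2).2) x₀ u
      unfold lqCost
      rw [Finset.range_eq_Ico]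
      exact h
    have hquad : ∀ s, s < N → ∀ w : Fin m → ℝ,
        α * (w ⬝ᵥ w) ≤ w ⬝ᵥ (R s + (B s)ᵀ * ricP N A B Q R S H (s + 1) * B s) *ᵥ w := by
      intro s hs w
      have hp := (hg2 s (by omega) hs).1
      have h := (posSemidef_iff_dotProduct_mulVec.1 hp).2 w
      rw [star_trivial, Matrix.sub_mulVec, dotProduct_sub, Matrix.smul_mulVec,
        Matrix.one_mulVec, dotProduct_smul, smul_eq_mul] at h
      linarith
    have hDnn : ∀ (x₀ : Fin n → ℝ) (u : ℕ → Fin m → ℝ), ∀ s ∈ Ico 0 N,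
        0 ≤ ((u s - K s *ᵥ lqState A B x₀ u s) ⬝ᵥ
              (R s + (B s)ᵀ * ricP N A B Q R S H (s + 1) * B s) *ᵥ
             (u s - K s *ᵥ lqState A B x₀ u s)) := by
      intro x₀ u s hs
      have hsN : s < N := (Finset.mem_Ico.1 hs).2
      have h := hquad s hsN (u s - K s *ᵥ lqState A B x₀ u s)
      have h2 := dp_self_nonneg (u s - K s *ᵥ lqState A B x₀ u s)
      nlinarith
    have hclzero : ∀ x₀ : Fin n → ℝ,
        lqCost N A B Q R S H x₀ (clControl A B K (fun _ => 0) x₀)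
        = x₀ ⬝ᵥ ricP N A B Q R S H 0 *ᵥ x₀ := by
      intro x₀
      rw [costid x₀ (clControl A B K (fun _ => 0) x₀)]
      have hz : ∑ s ∈ Ico 0 N,
          ((clControl A B K (fun _ => 0) x₀ s
              - K s *ᵥ lqState A B x₀ (clControl A B K (fun _ => 0) x₀) s) ⬝ᵥ
            (R s + (B s)ᵀ * ricP N A B Q R S H (s + 1) * B s) *ᵥ
           (clControl A B K (fun _ => 0) x₀ s
              - K s *ᵥ lqState A B x₀ (clControl A B K (fun _ => 0) x₀) s)) = 0 := by
        apply Finset.sum_eq_zero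
        intro s _
        have hd : clControl A B K (fun _ => 0) x₀ s
            - K s *ᵥ lqState A B x₀ (clControl A B K (fun _ => 0) x₀) s = 0 := by
          rw [clEq A B K x₀ s]
          simp [clControl]
        rw [hd]
        simp
      rw [hz]
      show lqState A B x₀ (clControl A B K (fun _ => 0) x₀) 0 ⬝ᵥ _ *ᵥ
          lqState A B x₀ (clControl A B K (fun _ => 0) x₀) 0 + 0 = _
      rw [add_zero]
      rfl
    constructor
    · -- closed-loop optimality
      intro x₀ u
      rw [hclzero x₀, costid x₀ u]
      have hnn := Finset.sum_nonneg (hDnn x₀ u)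
      have hx0 : lqState A B x₀ u 0 = x₀ := rfl
      rw [hx0]
      linarith
    · -- uniqueness of the optimal control
      intro x₀ ubar hopt t htN
      have h1 := costid x₀ ubar
      have hle := hopt (clControl A B K (fun _ => 0) x₀)
      rw [hclzero x₀] at hle
      have hx0 : lqState A B x₀ ubar 0 = x₀ := rfl
      rw [hx0] at h1
      have hsum0 : ∑ s ∈ Ico 0 N,
          ((ubar s - K s *ᵥ lqState A B x₀ ubar s) ⬝ᵥ
            (R s + (B s)ᵀ * ricP N A B Q R S H (s + 1) * B s) *ᵥ
           (ubar s - K s *ᵥ lqState A B x₀ ubar s)) = 0 := by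
        have hnn := Finset.sum_nonneg (hDnn x₀ ubar)
        linarith
      have hall := (Finset.sum_eq_zero_iff_of_nonneg (hDnn x₀ ubar)).1 hsum0
      have hub : ∀ s, s < N → ubar s = K s *ᵥ lqState A B x₀ ubar s := by
        intro s hs
        have h := hall s (Finset.mem_Ico.2 ⟨Nat.zero_le s, hs⟩)
        have h2 := hquad s hs (ubar s - K s *ᵥ lqState A B x₀ ubar s)
        rw [h] at h2
        have h3 := dp_self_nonneg (ubar s - K s *ᵥ lqState A B x₀ ubar s)
        have h4 : (ubar s - K s *ᵥ lqState A B x₀ ubar s) ⬝ᵥ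
            (ubar s - K s *ᵥ lqState A B x₀ ubar s) = 0 := by nlinarith
        have h5 := dotProduct_self_eq_zero.1 h4
        exact sub_eq_zero.1 h5
      have hxeq : ∀ s, s ≤ N → lqState A B x₀ ubar s = clState A B K (fun _ => 0) x₀ s := by
        intro s
        induction s with
        | zero => intro _; rfl
        | succ s ih =>
          intro hsN
          have hs : s < N := by omega
          show A s *ᵥ lqState A B x₀ ubar s + B s *ᵥ ubar s = _
          rw [hub s hs, ih (by omega)]
          show _ = (A s + B s * K s) *ᵥ clState A B K (fun _ => 0) x₀ s
              + B s *ᵥ (0 : Fin m → ℝ)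
          simp [Matrix.add_mulVec, mulVec_mulVec]
      rw [hub t htN, hxeq t (le_of_lt htN)]
      simp [clControl]
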